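/- Let p ≥ 1 be an integer, let N be a p-rooted almost-binary phylogenetic network on X, and let {Z_1, ..., Z_d} be the maximal zig-zag trail decomposition of N. For any S ⊆ E(N), the induced subgraph N[S] is a minimum support network of N (i.e., has the fewest edges among all support networks of N) if and only if S ∩ E(Z_i) is a C-admissible subset of E(Z_i) for every i ∈ [1, d]. -/

import Mathlib

set_option linter.unusedSectionVars false
set_option maxHeartbeats 1000000


open Finset

variable {V : Type} [DecidableEq V] [Fintype V]

/-- The vertex set of the digraph given by the edge set `E`. -/
def verts (E : Finset (V × V)) : Finset V :=
  E.image Prod.fst ∪ E.image Prod.snd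

/-- In-degree of `v` in the digraph with edge set `E`. -/
def indeg (E : Finset (V × V)) (v : V) : ℕ :=
  (E.filter fun e => e.2 = v).card

/-- Out-degree of `v` in the digraph with edge set `E`. -/
def outdeg (E : Finset (V × V)) (v : V) : ℕ :=
  (E.filter fun e => e.1 = v).card

/-- `E` is (the edge set of) a `p`-rooted almost-binary phylogenetic network on `X`:
a finite simple DAG with exactly `p` in-degree-0 vertices, each of out-degree 1 or 2 (the roots),
whose set of in-degree-1, out-degree-0 vertices is `X` (the leaves), and all of whose other
vertices have in-degree and out-degree in `{1, 2}`. -/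
structure IsPhyloNet (E : Finset (V × V)) (p : ℕ) (X : Finset V) : Prop where
  acyclic : ∀ v : V, ¬ Relation.TransGen (fun a b => (a, b) ∈ E) v v
  roots_card : ((verts E).filter fun v => indeg E v = 0).card = p
  root_outdeg : ∀ v ∈ verts E, indeg E v = 0 → outdeg E v = 1 ∨ outdeg E v = 2
  leaves_eq : (verts E).filter (fun v => indeg E v = 1 ∧ outdeg E v = 0) = X
  internal_deg : ∀ v ∈ verts E, indeg E v ≠ 0 → v ∉ X →
    (indeg E v = 1 ∨ indeg E v = 2) ∧ (outdeg E v = 1 ∨ outdeg E v = 2)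

/-- Two directed edges share a tail or share a head. -/
def Shares (e f : V × V) : Prop := e.1 = f.1 ∨ e.2 = f.2

/-- `S` is (the edge set of) a zig-zag trail of the digraph `E`: a subgraph with `m ≥ 1`
edges which can be ordered so that consecutive edges share a head or share a tail. -/
def IsZigzagTrail (E S : Finset (V × V)) : Prop :=
  S ⊆ E ∧ ∃ l : List (V × V), l ≠ [] ∧ l.Nodup ∧ l.toFinset = S ∧ l.Chain' Shares

/-- A maximal zig-zag trail: one that is not a proper subgraph of another zig-zag trail. -/
def IsMaximalZigzagTrail (E S : Finset (V × V)) : Prop :=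
  IsZigzagTrail E S ∧ ∀ S', IsZigzagTrail E S' → ¬ S ⊂ S'

/-- The `i`-th edge (0-indexed) of a zig-zag sequence on vertices `f 0, f 1, ...`;
when `down = true` the first edge descends (`f 0 > f 1`), and directions alternate. -/
def zigEdge (f : ℕ → V) (down : Bool) (i : ℕ) : V × V :=
  if decide (i % 2 = 0) = down then (f i, f (i + 1)) else (f (i + 1), f i)

/-- `S` consists of the `m` distinct edges of the zig-zag sequence on `f 0, ..., f m`. -/
def IsZigzagShape (S : Finset (V × V)) (m : ℕ) (f : ℕ → V) (down : Bool) : Prop :=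
  S = (Finset.range m).image (zigEdge f down) ∧
  ∀ i < m, ∀ j < m, zigEdge f down i = zigEdge f down j → i = j

/-- A crown: an even number `m` of edges written cyclically as `v₀ > v₁ < ⋯ < v_m = v₀`. -/
def IsCrown (S : Finset (V × V)) : Prop :=
  ∃ m f, 1 ≤ m ∧ m % 2 = 0 ∧ f m = f 0 ∧ IsZigzagShape S m f true

/-- An M-fence: a non-crown with an even number `m` of edges,
of the form `v₀ < v₁ > ⋯ > v_m ≠ v₀`. -/
def IsMFence (S : Finset (V × V)) : Prop :=
  ¬ IsCrown S ∧ ∃ m f, 1 ≤ m ∧ m % 2 = 0 ∧ f m ≠ f 0 ∧ IsZigzagShape S m f false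

/-- A W-fence: a non-crown with an even number `m` of edges,
of the form `v₀ > v₁ < ⋯ < v_m ≠ v₀`. -/
def IsWFence (S : Finset (V × V)) : Prop :=
  ¬ IsCrown S ∧ ∃ m f, 1 ≤ m ∧ m % 2 = 0 ∧ f m ≠ f 0 ∧ IsZigzagShape S m f true

/-- An N-fence: a non-crown with an odd number `m` of edges,
of the form `v₀ > v₁ < ⋯ > v_m`. -/
def IsNFence (S : Finset (V × V)) : Prop :=
  ¬ IsCrown S ∧ ∃ m f, m % 2 = 1 ∧ IsZigzagShape S m f true

/-- A support network of `N = (V, E)`: a spanning subgraph that is itself a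
`p`-rooted almost-binary phylogenetic network on `X` (identified with its edge set). -/
def IsSupportNet (E S : Finset (V × V)) (p : ℕ) (X : Finset V) : Prop :=
  S ⊆ E ∧ verts S = verts E ∧ IsPhyloNet S p X

/-- A minimal support network: no support network is a proper subgraph of it. -/
def IsMinimalSupportNet (E S : Finset (V × V)) (p : ℕ) (X : Finset V) : Prop :=
  IsSupportNet E S p X ∧ ∀ S', IsSupportNet E S' p X → ¬ S' ⊂ S

/-- A minimum support network: one with the fewest edges among all support networks. -/
def IsMinimumSupportNet (E S : Finset (V × V)) (p : ℕ) (X : Finset V) : Prop :=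
  IsSupportNet E S p X ∧ ∀ S', IsSupportNet E S' p X → S.card ≤ S'.card

/-- `S ⊆ Z` is A-admissible (degrees taken in the ambient network `E`):
(C1) `S` contains every edge `(u,v)` of `Z` with `outdeg u = 1` or `indeg v = 1`;
(C2) of any two distinct edges of `Z` sharing a tail or a head, `S` contains at least one. -/
def AAdmissible (E Z S : Finset (V × V)) : Prop :=
  S ⊆ Z ∧
  (∀ e ∈ Z, (outdeg E e.1 = 1 ∨ indeg E e.2 = 1) → e ∈ S) ∧
  (∀ e₁ ∈ Z, ∀ e₂ ∈ Z, e₁ ≠ e₂ → Shares e₁ e₂ → e₁ ∈ S ∨ e₂ ∈ S)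

/-- A B-admissible subset: an A-admissible subset none of whose proper subsets
is A-admissible. -/
def BAdmissible (E Z S : Finset (V × V)) : Prop :=
  AAdmissible E Z S ∧ ∀ S', S' ⊂ S → ¬ AAdmissible E Z S'

/-- A C-admissible subset: an A-admissible subset of minimum cardinality. -/
def CAdmissible (E Z S : Finset (V × V)) : Prop :=
  AAdmissible E Z S ∧ ∀ S', AAdmissible E Z S' → S.card ≤ S'.card

/-- One subdivision step: an edge `(u, v)` is replaced by `(u, w), (w, v)` for a fresh
vertex `w`. -/
def SubdivStep (T T' : Finset (V × V)) : Prop :=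
  ∃ u w v, (u, v) ∈ T ∧ w ∉ verts T ∧
    T' = insert (u, w) (insert (w, v) (T.erase (u, v)))

/-- `S` is a subdivision of `T` (zero or more subdivision steps). -/
def IsSubdivisionOf (S T : Finset (V × V)) : Prop :=
  Relation.ReflTransGen SubdivStep T S

/-- A rooted binary phylogenetic tree on `X`: a 1-rooted network on `X` in which every
non-root, non-leaf vertex has in-degree 1 and out-degree 2. -/
def IsBinaryPhyloTree (T : Finset (V × V)) (X : Finset V) : Prop :=
  IsPhyloNet T 1 X ∧
  ∀ v ∈ verts T, indeg T v ≠ 0 → v ∉ X → indeg T v = 1 ∧ outdeg T v = 2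

/-- `N = (V, E)` is tree-based: it has a support tree, i.e. a spanning subgraph that is a
subdivision of some rooted binary phylogenetic tree on `X`. -/
def IsTreeBased (E : Finset (V × V)) (X : Finset V) : Prop :=
  ∃ S T, S ⊆ E ∧ verts S = verts E ∧ IsBinaryPhyloTree T X ∧ IsSubdivisionOf S T

/-- The underlying undirected simple graph of the digraph with edge set `S`. -/
def usym (S : Finset (V × V)) : SimpleGraph V where
  Adj u v := u ≠ v ∧ ((u, v) ∈ S ∨ (v, u) ∈ S)
  symm := ⟨fun _ _ h => ⟨h.1.symm, h.2.symm⟩⟩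
  loopless := ⟨fun _ h => h.1 rfl⟩

/-- Two edges of `S` lie in a common block of the underlying undirected graph:
they are equal or lie on a common cycle. -/
def SameBlock (S : Finset (V × V)) (e f : V × V) : Prop :=
  e = f ∨ ∃ (a : V) (w : (usym S).Walk a a), w.IsCycle ∧
    s(e.1, e.2) ∈ w.edges ∧ s(f.1, f.2) ∈ w.edges

/-- The number of reticulations (in-degree-2 vertices) contained in the block of the
edge `e` of `S`. -/
noncomputable def blockReticCount (S : Finset (V × V)) (e : V × V) : ℕ :=
  Set.ncard {v : V | indeg S v = 2 ∧ ∃ f ∈ S, SameBlock S e f ∧ (f.1 = v ∨ f.2 = v)}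

/-- The level of the network with edge set `S`: the maximum number of reticulations
contained in a block. -/
noncomputable def level (S : Finset (V × V)) : ℕ :=
  S.sup (blockReticCount S)

lemma shares_symm {e f : V × V} (h : Shares e f) : Shares f e := by
  cases h with
  | inl h => exact Or.inl h.symm
  | inr h => exact Or.inr h.symm

lemma indeg_mono {S E : Finset (V × V)} (h : S ⊆ E) (v : V) : indeg S v ≤ indeg E v :=
  Finset.card_le_card (Finset.filter_subset_filter _ h)

lemma outdeg_mono {S E : Finset (V × V)} (h : S ⊆ E) (v : V) : outdeg S v ≤ outdeg E v :=
  Finset.card_le_card (Finset.filter_subset_filter _ h)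

lemma mem_verts_iff {E : Finset (V × V)} {v : V} :
    v ∈ verts E ↔ 1 ≤ indeg E v ∨ 1 ≤ outdeg E v := by
  have h1 : (1 ≤ indeg E v) ↔ (E.filter fun e => e.2 = v).Nonempty := by
    unfold indeg; exact Finset.card_pos
  have h2 : (1 ≤ outdeg E v) ↔ (E.filter fun e => e.1 = v).Nonempty := by
    unfold outdeg; exact Finset.card_pos
  rw [h1, h2]
  simp only [verts, Finset.mem_union, Finset.mem_image, Finset.filter_nonempty_iff]
  constructor
  · rintro (⟨e, he, rfl⟩ | ⟨e, he, rfl⟩)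
    · exact Or.inr ⟨e, he, rfl⟩
    · exact Or.inl ⟨e, he, rfl⟩
  · rintro (⟨e, he, h⟩ | ⟨e, he, h⟩)
    · exact Or.inr ⟨e, he, h⟩
    · exact Or.inl ⟨e, he, h⟩

lemma tail_mem_verts {E : Finset (V × V)} {e : V × V} (h : e ∈ E) : e.1 ∈ verts E :=
  Finset.mem_union_left _ (Finset.mem_image_of_mem _ h)

lemma head_mem_verts {E : Finset (V × V)} {e : V × V} (h : e ∈ E) : e.2 ∈ verts E :=
  Finset.mem_union_right _ (Finset.mem_image_of_mem _ h)

lemma one_le_outdeg {E : Finset (V × V)} {e : V × V} (h : e ∈ E) : 1 ≤ outdeg E e.1 :=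
  Finset.card_pos.mpr ⟨e, Finset.mem_filter.mpr ⟨h, rfl⟩⟩

lemma one_le_indeg {E : Finset (V × V)} {e : V × V} (h : e ∈ E) : 1 ≤ indeg E e.2 :=
  Finset.card_pos.mpr ⟨e, Finset.mem_filter.mpr ⟨h, rfl⟩⟩

lemma leaf_degs {E : Finset (V × V)} {p : ℕ} {X : Finset V} (hN : IsPhyloNet E p X)
    {v : V} (hv : v ∈ X) : indeg E v = 1 ∧ outdeg E v = 0 := by
  rw [← hN.leaves_eq] at hv
  exact (Finset.mem_filter.mp hv).2

lemma outdeg_le_two {E : Finset (V × V)} {p : ℕ} {X : Finset V} (hN : IsPhyloNet E p X)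
    {e : V × V} (he : e ∈ E) : outdeg E e.1 ≤ 2 := by
  have hv := tail_mem_verts he
  have h1 := one_le_outdeg he
  by_cases h0 : indeg E e.1 = 0
  · rcases hN.root_outdeg _ hv h0 with h | h <;> omega
  · by_cases hx : e.1 ∈ X
    · have := (leaf_degs hN hx).2; omega
    · rcases (hN.internal_deg _ hv h0 hx).2 with h | h <;> omega

lemma indeg_le_two {E : Finset (V × V)} {p : ℕ} {X : Finset V} (hN : IsPhyloNet E p X)
    {e : V × V} (he : e ∈ E) : indeg E e.2 ≤ 2 := by
  have hv := head_mem_verts he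
  have h1 := one_le_indeg he
  have h0 : indeg E e.2 ≠ 0 := by omega
  by_cases hx : e.2 ∈ X
  · have := (leaf_degs hN hx).1; omega
  · rcases (hN.internal_deg _ hv h0 hx).1 with h | h <;> omega

lemma indeg_le_two' {E : Finset (V × V)} {p : ℕ} {X : Finset V} (hN : IsPhyloNet E p X)
    {v : V} (h : 1 ≤ indeg E v) : indeg E v ≤ 2 := by
  obtain ⟨e, he⟩ := Finset.card_pos.mp h
  rw [Finset.mem_filter] at he
  have h2 := indeg_le_two hN he.1
  rw [he.2] at h2
  exact h2

lemma outdeg_le_two' {E : Finset (V × V)} {p : ℕ} {X : Finset V} (hN : IsPhyloNet E p X)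
    {v : V} (h : 1 ≤ outdeg E v) : outdeg E v ≤ 2 := by
  obtain ⟨e, he⟩ := Finset.card_pos.mp h
  rw [Finset.mem_filter] at he
  have h2 := outdeg_le_two hN he.1
  rw [he.2] at h2
  exact h2

lemma eq_of_outdeg_one {E : Finset (V × V)} {e f : V × V} (he : e ∈ E) (hf : f ∈ E)
    (h1 : outdeg E e.1 = 1) (hff : f.1 = e.1) : f = e :=
  Finset.card_le_one.mp h1.le f (Finset.mem_filter.mpr ⟨hf, hff⟩) e
    (Finset.mem_filter.mpr ⟨he, rfl⟩)

lemma eq_of_indeg_one {E : Finset (V × V)} {e f : V × V} (he : e ∈ E) (hf : f ∈ E)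
    (h1 : indeg E e.2 = 1) (hff : f.2 = e.2) : f = e :=
  Finset.card_le_one.mp h1.le f (Finset.mem_filter.mpr ⟨hf, hff⟩) e
    (Finset.mem_filter.mpr ⟨he, rfl⟩)

lemma shares_same_trail {E : Finset (V × V)} {p : ℕ} {X : Finset V} (hN : IsPhyloNet E p X)
    {d : ℕ} {Z : Fin d → Finset (V × V)}
    (hmax : ∀ i, IsMaximalZigzagTrail E (Z i))
    (hcover : Finset.univ.biUnion Z = E)
    {e1 e2 : V × V} (h1 : e1 ∈ E) (h2 : e2 ∈ E) (hne : e1 ≠ e2)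
    (hsh : Shares e1 e2) : ∃ i, e1 ∈ Z i ∧ e2 ∈ Z i := by
  have h1' : e1 ∈ Finset.univ.biUnion Z := hcover ▸ h1
  obtain ⟨i, -, hi⟩ := Finset.mem_biUnion.mp h1'
  refine ⟨i, hi, ?_⟩
  by_contra h2i
  obtain ⟨⟨hsub, l, hlne, hnd, hlf, hch⟩, hmaxi⟩ := hmax i
  have he1l : e1 ∈ l := by rw [← List.mem_toFinset, hlf]; exact hi
  set U := (E.filter fun f => f.1 = e1.1) ∪ (E.filter fun f => f.2 = e1.2) with hU
  have hUcard : U.card ≤ 3 := by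
    have hco := Finset.card_union_add_card_inter (E.filter fun f => f.1 = e1.1)
      (E.filter fun f => f.2 = e1.2)
    have hint : 1 ≤ ((E.filter fun f => f.1 = e1.1) ∩ (E.filter fun f => f.2 = e1.2)).card :=
      Finset.card_pos.mpr ⟨e1, Finset.mem_inter.mpr ⟨Finset.mem_filter.mpr ⟨h1, rfl⟩,
        Finset.mem_filter.mpr ⟨h1, rfl⟩⟩⟩
    have ho := outdeg_le_two hN h1
    have hin := indeg_le_two hN h1
    unfold outdeg at ho; unfold indeg at hin
    rw [hU]
    omega
  have hUmem : ∀ f ∈ E, Shares e1 f → f ∈ U := by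
    intro f hf hs
    rcases hs with h | h
    · exact Finset.mem_union_left _ (Finset.mem_filter.mpr ⟨hf, h.symm⟩)
    · exact Finset.mem_union_right _ (Finset.mem_filter.mpr ⟨hf, h.symm⟩)
  have he1U : e1 ∈ U := hUmem e1 h1 (Or.inl rfl)
  have he2U : e2 ∈ U := hUmem e2 h2 hsh
  have hZl : ∀ f ∈ l, f ∈ Z i := fun f hf => by rw [← hlf]; exact List.mem_toFinset.mpr hf
  have he2nl : e2 ∉ l := fun hc => h2i (hZl e2 hc)
  obtain ⟨l₁, l₂, rfl⟩ := List.append_of_mem he1l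
  by_cases hl₁ : l₁ = []
  · -- e1 is the first edge; prepend e2
    subst hl₁
    simp only [List.nil_append] at hch hnd hlf he2nl hZl
    have hT : IsZigzagTrail E (insert e2 (Z i)) := by
      refine ⟨Finset.insert_subset h2 hsub, e2 :: e1 :: l₂, by simp, ?_, ?_, ?_⟩
      · exact List.nodup_cons.mpr ⟨he2nl, hnd⟩
      · rw [List.toFinset_cons, hlf]
      · exact List.isChain_cons_cons.mpr ⟨shares_symm hsh, hch⟩
    exact hmaxi _ hT (Finset.ssubset_insert h2i)
  · by_cases hl₂ : l₂ = []
    · -- e1 is the last edge; append e2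
      subst hl₂
      have hT : IsZigzagTrail E (insert e2 (Z i)) := by
        refine ⟨Finset.insert_subset h2 hsub, (l₁ ++ [e1]) ++ [e2], by simp, ?_, ?_, ?_⟩
        · exact hnd.append (List.nodup_singleton _)
            (fun a ha hb => he2nl (by simp only [List.mem_singleton] at hb; rw [← hb]; exact ha))
        · rw [List.toFinset_append, hlf]; ext f; simp [or_comm]
        · change List.IsChain Shares _; rw [List.isChain_append]
          refine ⟨hch, List.isChain_singleton _, ?_⟩
          intro x hx y hy
          simp only [List.getLast?_concat, Option.mem_some_iff] at hx
          simp only [List.head?_cons, Option.mem_some_iff] at hy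
          rw [← hx, ← hy] at *
          exact hsh
      exact hmaxi _ hT (Finset.ssubset_insert h2i)
    · -- e1 is in the middle: contradiction via degree bound
      change List.IsChain Shares _ at hch; rw [List.isChain_append] at hch
      obtain ⟨g2, l₂', rfl⟩ := List.exists_cons_of_ne_nil hl₂
      have hg1mem : l₁.getLast hl₁ ∈ l₁ := List.getLast_mem hl₁
      set g1 := l₁.getLast hl₁ with hg1
      have hs1 : Shares g1 e1 := hch.2.2 g1 (by rw [List.getLast?_eq_getLast hl₁]; rfl) e1 (by simp)
      have hs2 : Shares e1 g2 := (List.isChain_cons_cons.mp hch.2.1).1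
      obtain ⟨hnd1, hnd2, hdisj12⟩ := List.nodup_append.mp hnd
      have he1c : e1 ∉ g2 :: l₂' := (List.nodup_cons.mp hnd2).1
      have hg1Z : g1 ∈ Z i := hZl g1 (by simp [hg1mem])
      have hg2Z : g2 ∈ Z i := hZl g2 (by simp)
      have hg1E : g1 ∈ E := hsub hg1Z
      have hg2E : g2 ∈ E := hsub hg2Z
      have hg1U : g1 ∈ U := hUmem g1 hg1E (shares_symm hs1)
      have hg2U : g2 ∈ U := hUmem g2 hg2E hs2
      have hne1g1 : e1 ≠ g1 := fun h => hdisj12 g1 hg1mem e1 List.mem_cons_self h.symm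
      have hne1g2 : e1 ≠ g2 := fun h => he1c (by rw [h]; exact List.mem_cons_self)
      have hg1g2 : g1 ≠ g2 := fun h => hdisj12 g1 hg1mem g2 (by simp) h
      have he2g1 : e2 ≠ g1 := fun h => h2i (h ▸ hg1Z)
      have he2g2 : e2 ≠ g2 := fun h => h2i (h ▸ hg2Z)
      have h4 : ({e1, e2, g1, g2} : Finset (V × V)) ⊆ U := by
        intro f hf
        simp only [Finset.mem_insert, Finset.mem_singleton] at hf
        rcases hf with rfl | rfl | rfl | rfl <;> assumption
      have hc4 : ({e1, e2, g1, g2} : Finset (V × V)).card = 4 := by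
        rw [Finset.card_insert_of_notMem (by simp [hne, hne1g1, hne1g2]),
          Finset.card_insert_of_notMem (by simp [he2g1, he2g2]),
          Finset.card_pair hg1g2]
      have := Finset.card_le_card h4
      omega

def Good (E S : Finset (V × V)) : Prop :=
  ∀ v : V, (1 ≤ indeg E v → 1 ≤ indeg S v) ∧ (1 ≤ outdeg E v → 1 ≤ outdeg S v)

lemma verts_eq_of_good {E S : Finset (V × V)} (hsub : S ⊆ E) (hg : Good E S) :
    verts S = verts E := by
  ext v
  rw [mem_verts_iff, mem_verts_iff]
  constructor
  · rintro (h | h)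
    · exact Or.inl (h.trans (indeg_mono hsub v))
    · exact Or.inr (h.trans (outdeg_mono hsub v))
  · rintro (h | h)
    · exact Or.inl ((hg v).1 h)
    · exact Or.inr ((hg v).2 h)

lemma supportNet_iff {E S : Finset (V × V)} {p : ℕ} {X : Finset V}
    (hN : IsPhyloNet E p X) (hsub : S ⊆ E) :
    IsSupportNet E S p X ↔ Good E S := by
  constructor
  · rintro ⟨-, hveq, hPh⟩ v
    constructor
    · intro hin
      by_contra h0'
      have h0 : indeg S v = 0 := by omega
      have hvE : v ∈ verts E := mem_verts_iff.mpr (Or.inl hin)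
      have hRE : ((verts E).filter fun u => indeg E u = 0) ⊂
          ((verts S).filter fun u => indeg S u = 0) := by
        constructor
        · intro u hu
          rw [Finset.mem_filter] at hu ⊢
          refine ⟨hveq ▸ hu.1, ?_⟩
          have := indeg_mono hsub u
          omega
        · intro hcon
          have hv : v ∈ ((verts S).filter fun u => indeg S u = 0) :=
            Finset.mem_filter.mpr ⟨hveq ▸ hvE, h0⟩
          have := hcon hv
          rw [Finset.mem_filter] at this
          omega
      have := Finset.card_lt_card hRE
      rw [hN.roots_card, hPh.roots_card] at this
      omega
    · intro hout
      by_contra h0'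
      have h0 : outdeg S v = 0 := by omega
      have hvE : v ∈ verts E := mem_verts_iff.mpr (Or.inr hout)
      have hvS : v ∈ verts S := hveq ▸ hvE
      by_cases hi0 : indeg S v = 0
      · rcases hPh.root_outdeg v hvS hi0 with h | h <;> omega
      · by_cases hx : v ∈ X
        · have := (leaf_degs hN hx).2; omega
        · rcases (hPh.internal_deg v hvS hi0 hx).2 with h | h <;> omega
  · intro hg
    have hveq := verts_eq_of_good hsub hg
    have hdeg0 : ∀ v, indeg S v = 0 ↔ indeg E v = 0 := by
      intro v
      have h1 := indeg_mono hsub v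
      have h2 := (hg v).1
      omega
    refine ⟨hsub, hveq, ?_, ?_, ?_, ?_, ?_⟩
    · intro v hv
      exact hN.acyclic v (Relation.TransGen.mono (fun a b h => hsub h) _ _ hv)
    · rw [hveq, ← hN.roots_card]
      congr 1
      apply Finset.filter_congr
      intro v _
      exact hdeg0 v
    · intro v hvS h0
      have hvE : v ∈ verts E := hveq ▸ hvS
      have hE0 : indeg E v = 0 := (hdeg0 v).mp h0
      have h1 := outdeg_mono hsub v
      have h2 := (hg v).2
      rcases hN.root_outdeg v hvE hE0 with h | h <;> omega
    · rw [hveq, ← hN.leaves_eq]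
      apply Finset.filter_congr
      intro v hvE
      have hi1 := indeg_mono hsub v
      have hi2 := (hg v).1
      have ho1 := outdeg_mono hsub v
      have ho2 := (hg v).2
      constructor
      · rintro ⟨hs1, hs0⟩
        have hEo : outdeg E v = 0 := by omega
        have hEi : indeg E v ≠ 0 := by omega
        by_cases hx : v ∈ X
        · exact ⟨(leaf_degs hN hx).1, (leaf_degs hN hx).2⟩
        · rcases (hN.internal_deg v hvE hEi hx).2 with h | h <;> omega
      · rintro ⟨hE1, hE0⟩
        omega
    · intro v hvS hi0 hx
      have hvE : v ∈ verts E := hveq ▸ hvS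
      have hEi : indeg E v ≠ 0 := fun h => hi0 ((hdeg0 v).mpr h)
      have hi1 := indeg_mono hsub v
      have hi2 := (hg v).1
      have ho1 := outdeg_mono hsub v
      have ho2 := (hg v).2
      obtain ⟨hA, hB⟩ := hN.internal_deg v hvE hEi hx
      constructor
      · rcases hA with h | h <;> omega
      · rcases hB with h | h <;> omega

lemma adm_iff {E S : Finset (V × V)} {p : ℕ} {X : Finset V}
    (hN : IsPhyloNet E p X) {d : ℕ} {Z : Fin d → Finset (V × V)}
    (hmax : ∀ i, IsMaximalZigzagTrail E (Z i))
    (hcover : Finset.univ.biUnion Z = E) (hsub : S ⊆ E) :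
    (∀ i, AAdmissible E (Z i) (S ∩ Z i)) ↔ Good E S := by
  constructor
  · intro hA v
    constructor
    · intro hin
      obtain ⟨e, he⟩ := Finset.card_pos.mp hin
      rw [Finset.mem_filter] at he
      obtain ⟨heE, hev⟩ := he
      have hle2 : indeg E v ≤ 2 := indeg_le_two' hN hin
      by_cases hone : indeg E v = 1
      · obtain ⟨i, -, hi⟩ := Finset.mem_biUnion.mp ((hcover ▸ heE) : e ∈ Finset.univ.biUnion Z)
        have heS : e ∈ S ∩ Z i := (hA i).2.1 e hi (Or.inr (by rw [hev]; exact hone))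
        exact Finset.card_pos.mpr ⟨e, Finset.mem_filter.mpr ⟨(Finset.mem_inter.mp heS).1, hev⟩⟩
      · have h2 : 1 < (E.filter fun f => f.2 = v).card := by
          unfold indeg at hin hle2 hone; omega
        obtain ⟨a, ha, b, hb, hab⟩ := Finset.one_lt_card.mp h2
        rw [Finset.mem_filter] at ha hb
        have hsh : Shares a b := Or.inr (ha.2.trans hb.2.symm)
        obtain ⟨i, hai, hbi⟩ := shares_same_trail hN hmax hcover ha.1 hb.1 hab hsh
        rcases (hA i).2.2 a hai b hbi hab hsh with h | h
        · exact Finset.card_pos.mpr ⟨a, Finset.mem_filter.mpr ⟨(Finset.mem_inter.mp h).1, ha.2⟩⟩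
        · exact Finset.card_pos.mpr ⟨b, Finset.mem_filter.mpr ⟨(Finset.mem_inter.mp h).1, hb.2⟩⟩
    · intro hout
      obtain ⟨e, he⟩ := Finset.card_pos.mp hout
      rw [Finset.mem_filter] at he
      obtain ⟨heE, hev⟩ := he
      have hle2 : outdeg E v ≤ 2 := outdeg_le_two' hN hout
      by_cases hone : outdeg E v = 1
      · obtain ⟨i, -, hi⟩ := Finset.mem_biUnion.mp ((hcover ▸ heE) : e ∈ Finset.univ.biUnion Z)
        have heS : e ∈ S ∩ Z i := (hA i).2.1 e hi (Or.inl (by rw [hev]; exact hone))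
        exact Finset.card_pos.mpr ⟨e, Finset.mem_filter.mpr ⟨(Finset.mem_inter.mp heS).1, hev⟩⟩
      · have h2 : 1 < (E.filter fun f => f.1 = v).card := by
          unfold outdeg at hout hle2 hone; omega
        obtain ⟨a, ha, b, hb, hab⟩ := Finset.one_lt_card.mp h2
        rw [Finset.mem_filter] at ha hb
        have hsh : Shares a b := Or.inl (ha.2.trans hb.2.symm)
        obtain ⟨i, hai, hbi⟩ := shares_same_trail hN hmax hcover ha.1 hb.1 hab hsh
        rcases (hA i).2.2 a hai b hbi hab hsh with h | h
        · exact Finset.card_pos.mpr ⟨a, Finset.mem_filter.mpr ⟨(Finset.mem_inter.mp h).1, ha.2⟩⟩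
        · exact Finset.card_pos.mpr ⟨b, Finset.mem_filter.mpr ⟨(Finset.mem_inter.mp h).1, hb.2⟩⟩
  · intro hg i
    have hZE : Z i ⊆ E := (hmax i).1.1
    refine ⟨Finset.inter_subset_right, ?_, ?_⟩
    · intro e heZ hdeg
      have heE : e ∈ E := hZE heZ
      refine Finset.mem_inter.mpr ⟨?_, heZ⟩
      rcases hdeg with h | h
      · obtain ⟨f, hf⟩ := Finset.card_pos.mp ((hg e.1).2 (one_le_outdeg heE))
        rw [Finset.mem_filter] at hf
        have : f = e := eq_of_outdeg_one heE (hsub hf.1) h hf.2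
        exact this ▸ hf.1
      · obtain ⟨f, hf⟩ := Finset.card_pos.mp ((hg e.2).1 (one_le_indeg heE))
        rw [Finset.mem_filter] at hf
        have : f = e := eq_of_indeg_one heE (hsub hf.1) h hf.2
        exact this ▸ hf.1
    · intro e1 h1Z e2 h2Z hne hsh
      have h1E : e1 ∈ E := hZE h1Z
      have h2E : e2 ∈ E := hZE h2Z
      rcases hsh with h | h
      · -- common tail
        have hle : outdeg E e1.1 ≤ 2 := outdeg_le_two hN h1E
        have hpair : ∀ f ∈ E, f.1 = e1.1 → f = e1 ∨ f = e2 := by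
          intro f hf hf1
          have hsub2 : ({e1, e2} : Finset (V × V)) ⊆ E.filter fun g => g.1 = e1.1 := by
            intro g hg
            rw [Finset.mem_insert, Finset.mem_singleton] at hg
            rcases hg with rfl | rfl
            · exact Finset.mem_filter.mpr ⟨h1E, rfl⟩
            · exact Finset.mem_filter.mpr ⟨h2E, h.symm⟩
          have hcard : (E.filter fun g => g.1 = e1.1).card ≤ ({e1, e2} : Finset (V × V)).card := by
            rw [Finset.card_pair hne]; exact hle
          have heq := Finset.eq_of_subset_of_card_le hsub2 hcard
          have hmem : f ∈ ({e1, e2} : Finset (V × V)) := by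
            rw [heq]; exact Finset.mem_filter.mpr ⟨hf, hf1⟩
          simpa using hmem
        obtain ⟨f, hf⟩ := Finset.card_pos.mp ((hg e1.1).2 (one_le_outdeg h1E))
        rw [Finset.mem_filter] at hf
        rcases hpair f (hsub hf.1) hf.2 with rfl | rfl
        · exact Or.inl (Finset.mem_inter.mpr ⟨hf.1, h1Z⟩)
        · exact Or.inr (Finset.mem_inter.mpr ⟨hf.1, h2Z⟩)
      · -- common head
        have hle : indeg E e1.2 ≤ 2 := indeg_le_two hN h1E
        have hpair : ∀ f ∈ E, f.2 = e1.2 → f = e1 ∨ f = e2 := by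
          intro f hf hf1
          have hsub2 : ({e1, e2} : Finset (V × V)) ⊆ E.filter fun g => g.2 = e1.2 := by
            intro g hg
            rw [Finset.mem_insert, Finset.mem_singleton] at hg
            rcases hg with rfl | rfl
            · exact Finset.mem_filter.mpr ⟨h1E, rfl⟩
            · exact Finset.mem_filter.mpr ⟨h2E, h.symm⟩
          have hcard : (E.filter fun g => g.2 = e1.2).card ≤ ({e1, e2} : Finset (V × V)).card := by
            rw [Finset.card_pair hne]; exact hle
          have heq := Finset.eq_of_subset_of_card_le hsub2 hcard
          have hmem : f ∈ ({e1, e2} : Finset (V × V)) := by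
            rw [heq]; exact Finset.mem_filter.mpr ⟨hf, hf1⟩
          simpa using hmem
        obtain ⟨f, hf⟩ := Finset.card_pos.mp ((hg e1.2).1 (one_le_indeg h1E))
        rw [Finset.mem_filter] at hf
        rcases hpair f (hsub hf.1) hf.2 with rfl | rfl
        · exact Or.inl (Finset.mem_inter.mpr ⟨hf.1, h1Z⟩)
        · exact Or.inr (Finset.mem_inter.mpr ⟨hf.1, h2Z⟩)

lemma card_partition {E S : Finset (V × V)} {d : ℕ} {Z : Fin d → Finset (V × V)}
    (hdisj : ∀ i j, i ≠ j → Disjoint (Z i) (Z j))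
    (hcover : Finset.univ.biUnion Z = E) (hsub : S ⊆ E) :
    S.card = ∑ i, (S ∩ Z i).card := by
  have hrep : S = Finset.univ.biUnion (fun i => S ∩ Z i) := by
    ext e
    simp only [Finset.mem_biUnion, Finset.mem_inter, Finset.mem_univ, true_and]
    constructor
    · intro he
      obtain ⟨i, -, hi⟩ := Finset.mem_biUnion.mp ((hcover ▸ hsub he) : e ∈ Finset.univ.biUnion Z)
      exact ⟨i, he, hi⟩
    · rintro ⟨i, he, -⟩
      exact he
  conv_lhs => rw [hrep]
  exact Finset.card_biUnion fun i _ j _ hij =>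
    Finset.disjoint_left.mpr fun e he1 he2 =>
      Finset.disjoint_left.mp (hdisj i j hij) (Finset.mem_inter.mp he1).2 (Finset.mem_inter.mp he2).2

/-- `N[S]` is a minimum support network of `N` iff `S ∩ E(Zᵢ)` is C-admissible in `E(Zᵢ)`
for every maximal zig-zag trail `Zᵢ` of the decomposition of `N`. -/
theorem stmt8 (p : ℕ) (hp : 1 ≤ p) (X : Finset V) (hX : X.Nonempty)
    (E : Finset (V × V)) (hN : IsPhyloNet E p X)
    (d : ℕ) (Z : Fin d → Finset (V × V))
    (hmax : ∀ i, IsMaximalZigzagTrail E (Z i))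
    (hdisj : ∀ i j, i ≠ j → Disjoint (Z i) (Z j))
    (hcover : Finset.univ.biUnion Z = E)
    (S : Finset (V × V)) (hS : S ⊆ E) :
    IsMinimumSupportNet E S p X ↔ ∀ i, CAdmissible E (Z i) (S ∩ Z i) := by
  constructor
  · rintro ⟨hsupp, hminc⟩ i
    have hgood := (supportNet_iff hN hS).mp hsupp
    have hA := (adm_iff hN hmax hcover hS).mpr hgood
    refine ⟨hA i, fun T hT => ?_⟩
    have hTZ : T ⊆ Z i := hT.1
    set S' := (S \ Z i) ∪ T with hS'def
    have hS'E : S' ⊆ E :=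
      Finset.union_subset (Finset.sdiff_subset.trans hS) (hTZ.trans (hmax i).1.1)
    have hii : S' ∩ Z i = T := by
      ext e
      rw [Finset.mem_inter, hS'def, Finset.mem_union, Finset.mem_sdiff]
      constructor
      · rintro ⟨⟨-, hnz⟩ | ht, hz⟩
        · exact absurd hz hnz
        · exact ht
      · intro ht
        exact ⟨Or.inr ht, hTZ ht⟩
    have hij : ∀ j, j ≠ i → S' ∩ Z j = S ∩ Z j := by
      intro j hj
      have hd := hdisj i j fun hh => hj hh.symm
      ext e
      rw [Finset.mem_inter, Finset.mem_inter, hS'def, Finset.mem_union, Finset.mem_sdiff]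
      constructor
      · rintro ⟨⟨hs, -⟩ | ht, hz⟩
        · exact ⟨hs, hz⟩
        · exact absurd hz (Finset.disjoint_left.mp hd (hTZ ht))
      · rintro ⟨hs, hz⟩
        exact ⟨Or.inl ⟨hs, fun hzi => Finset.disjoint_left.mp hd hzi hz⟩, hz⟩
    have hA' : ∀ j, AAdmissible E (Z j) (S' ∩ Z j) := by
      intro j
      by_cases hj : j = i
      · subst hj; rw [hii]; exact hT
      · rw [hij j hj]; exact hA j
    have hgood' := (adm_iff hN hmax hcover hS'E).mp hA'
    have hsupp' := (supportNet_iff hN hS'E).mpr hgood'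
    have hcard : S.card ≤ S'.card := hminc S' hsupp'
    rw [card_partition hdisj hcover hS, card_partition hdisj hcover hS'E] at hcard
    rw [← Finset.sum_erase_add _ _ (Finset.mem_univ i),
      ← Finset.sum_erase_add _ _ (Finset.mem_univ i)] at hcard
    have heq : ∑ j ∈ Finset.univ.erase i, (S ∩ Z j).card
        = ∑ j ∈ Finset.univ.erase i, (S' ∩ Z j).card :=
      Finset.sum_congr rfl fun j hj => by rw [hij j (Finset.mem_erase.mp hj).1]
    rw [hii] at hcard
    omega
  · intro hC
    have hA : ∀ i, AAdmissible E (Z i) (S ∩ Z i) := fun i => (hC i).1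
    have hgood := (adm_iff hN hmax hcover hS).mp hA
    refine ⟨(supportNet_iff hN hS).mpr hgood, fun S' hS' => ?_⟩
    have hS'E : S' ⊆ E := hS'.1
    have hgood' := (supportNet_iff hN hS'E).mp hS'
    have hA' := (adm_iff hN hmax hcover hS'E).mpr hgood'
    rw [card_partition hdisj hcover hS, card_partition hdisj hcover hS'E]
    exact Finset.sum_le_sum fun i _ => (hC i).2 _ (hA' i)
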